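/- Let R be a left artinian ring with Jacobson radical J, and let 0 → U₁ → M₁ ⊕ M₂ → U₂ → 0 be a short exact sequence of finitely generated left R-modules in which U₁ and U₂ are nonzero uniserial modules and M₁ and M₂ are nonzero modules. Then both quotient modules M₁/(J•M₁) and M₂/(J•M₂) are simple. -/

import Mathlib

/-- A module is *uniserial* if its submodules are totally ordered by inclusion. -/
def IsUniserialModule (R M : Type) [Ring R] [AddCommGroup M] [Module R M] : Prop :=
  ∀ N₁ N₂ : Submodule R M, N₁ ≤ N₂ ∨ N₂ ≤ N₁

/-- The Jacobson radical of the ring `R` (the intersection of the maximal left ideals). -/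
noncomputable def ringJacobson (R : Type) [Ring R] : Ideal R :=
  Ideal.jacobson (⊥ : Ideal R)

/-- The submodule `J•M`, where `J` is the Jacobson radical of `R`. -/
noncomputable def radicalSubmodule (R M : Type) [Ring R] [AddCommGroup M] [Module R M] :
    Submodule R M :=
  ringJacobson R • (⊤ : Submodule R M)

/-- The socle of a module: the sum of all of its simple submodules. -/
def socle (R M : Type) [Ring R] [AddCommGroup M] [Module R M] : Submodule R M :=
  sSup {N : Submodule R M | IsSimpleModule R ↥N}

/-- A linear map is a split monomorphism if it has a left inverse. -/
def IsSplitMono {R M N : Type} [Ring R] [AddCommGroup M] [Module R M]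
    [AddCommGroup N] [Module R N] (f : M →ₗ[R] N) : Prop :=
  ∃ g : N →ₗ[R] M, g ∘ₗ f = LinearMap.id

/-- A linear map is a split epimorphism if it has a right inverse. -/
def IsSplitEpi {R M N : Type} [Ring R] [AddCommGroup M] [Module R M]
    [AddCommGroup N] [Module R N] (f : M →ₗ[R] N) : Prop :=
  ∃ g : N →ₗ[R] M, f ∘ₗ g = LinearMap.id

/-- A linear map `f : M → N` is *irreducible* if it is neither a split monomorphism nor a
split epimorphism, and in any factorization `f = g ∘ h`, either `h` is a split monomorphism
or `g` is a split epimorphism. -/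
def IsIrreducibleMap {R M N : Type} [Ring R] [AddCommGroup M] [Module R M]
    [AddCommGroup N] [Module R N] (f : M →ₗ[R] N) : Prop :=
  ¬ IsSplitMono f ∧ ¬ IsSplitEpi f ∧
    ∀ (X : Type) [AddCommGroup X] [Module R X] (h : M →ₗ[R] X) (g : X →ₗ[R] N),
      g ∘ₗ h = f → IsSplitMono h ∨ IsSplitEpi g

/-- A module is *indecomposable* if it is nonzero and is not the internal direct sum of two
nonzero submodules. -/
def IsIndecomposableModule (R M : Type) [Ring R] [AddCommGroup M] [Module R M] : Prop :=
  Nontrivial M ∧ ∀ N₁ N₂ : Submodule R M, IsCompl N₁ N₂ → N₁ = ⊥ ∨ N₂ = ⊥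



open Submodule LinearMap

section Aux

variable {R : Type} [Ring R]

/-- The lattice of submodules of a f.g. module is coatomic. -/
lemma aux_isCoatomic (M : Type) [AddCommGroup M] [Module R M] [Module.Finite R M] :
    IsCoatomic (Submodule R M) :=
  CompleteLattice.coatomic_of_top_compact
    ((Submodule.fg_iff_compact ⊤).mp (Module.finite_def.mp ‹_›))

/-- The Jacobson radical times M is contained in every maximal submodule. -/
lemma aux_rad_le_coatom {M : Type} [AddCommGroup M] [Module R M]
    {m : Submodule R M} (hm : IsCoatom m) : radicalSubmodule R M ≤ m := by
  haveI : IsSimpleModule R (M ⧸ m) := isSimpleModule_iff_isCoatom.mpr hm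
  rw [radicalSubmodule]
  refine Submodule.smul_le.mpr fun r hr x _ => ?_
  rw [← Submodule.Quotient.mk_eq_zero m, Submodule.Quotient.mk_smul]
  by_cases h0 : (Submodule.Quotient.mk x : M ⧸ m) = 0
  · rw [h0, smul_zero]
  · have hsurj := IsSimpleModule.toSpanSingleton_surjective R h0
    have hco : IsCoatom (ker (LinearMap.toSpanSingleton R (M ⧸ m)
        (Submodule.Quotient.mk x))) := LinearMap.isCoatom_ker_of_surjective hsurj
    have hJ : ringJacobson R ≤ ker (LinearMap.toSpanSingleton R (M ⧸ m)
        (Submodule.Quotient.mk x)) :=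
      sInf_le ⟨bot_le, Ideal.isMaximal_def.mpr hco⟩
    exact hJ hr

lemma aux_rad_ne_top {M : Type} [AddCommGroup M] [Module R M] [Module.Finite R M]
    [Nontrivial M] : radicalSubmodule R M ≠ ⊤ := by
  haveI := aux_isCoatomic (R := R) M
  rcases eq_top_or_exists_le_coatom (⊥ : Submodule R M) with h | ⟨m, hm, -⟩
  · obtain ⟨x, hx⟩ := exists_ne (0 : M)
    have hx' : x ∈ (⊥ : Submodule R M) := by rw [h]; trivial
    exact absurd (by simpa using hx') hx
  · exact fun htop => hm.1 (top_le_iff.mp (htop ▸ aux_rad_le_coatom hm))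

lemma aux_prod_semisimple {M N : Type} [AddCommGroup M] [Module R M] [AddCommGroup N]
    [Module R N] [IsSemisimpleModule R M] [IsSemisimpleModule R N] :
    IsSemisimpleModule R (M × N) := by
  refine isSemisimpleModule_of_isSemisimpleModule_submodule'
    (p := fun b : Bool => if b then range (inl R M N) else range (inr R M N)) ?_ ?_
  · rintro (_ | _)
    · show IsSemisimpleModule R ↥(range (inr R M N))
      exact IsSemisimpleModule.congr (LinearEquiv.ofInjective _ (inr_injective
        (M := M) (M₂ := N))).symm
    · show IsSemisimpleModule R ↥(range (inl R M N))
      exact IsSemisimpleModule.congr (LinearEquiv.ofInjective _ (inl_injective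
        (M := M) (M₂ := N))).symm
  · rw [iSup_bool_eq]
    simpa using sup_range_inl_inr (R := R) (M := M) (M₂ := N)

/-- Over an artinian ring, `R ⧸ J` is a semisimple module. -/
lemma aux_semisimple_quot_jacobson [IsArtinianRing R] [Nontrivial R] :
    IsSemisimpleModule R (R ⧸ (ringJacobson R : Ideal R)) := by
  classical
  set S : Set (Ideal R) := {I | IsSemisimpleModule R (R ⧸ I)} with hS
  have hne : S.Nonempty := by
    obtain ⟨m, hm⟩ := Ideal.exists_maximal R
    haveI : IsSimpleModule R (R ⧸ m) :=
      isSimpleModule_iff_isCoatom.mpr (Ideal.isMaximal_def.mp hm)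
    exact ⟨m, (inferInstance : IsSemisimpleModule R (R ⧸ m))⟩
  obtain ⟨I₀, hI₀, hmin⟩ := IsArtinian.set_has_minimal S hne
  haveI : IsSemisimpleModule R (R ⧸ I₀) := hI₀
  have hle : I₀ ≤ ringJacobson R := by
    rw [ringJacobson, Ideal.jacobson]
    refine le_sInf fun m hm => ?_
    by_contra hnot
    haveI : IsSimpleModule R (R ⧸ m) :=
      isSimpleModule_iff_isCoatom.mpr (Ideal.isMaximal_def.mp hm.2)
    -- R ⧸ (I₀ ⊓ m) embeds into (R ⧸ I₀) × (R ⧸ m)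
    have h1 : I₀ ⊓ m ≤ comap (LinearMap.id : R →ₗ[R] R) I₀ := by simpa using inf_le_left
    have h2 : I₀ ⊓ m ≤ comap (LinearMap.id : R →ₗ[R] R) m := by simpa using inf_le_right
    set φ : R ⧸ (I₀ ⊓ m) →ₗ[R] (R ⧸ I₀) × (R ⧸ m) :=
      LinearMap.prod (Submodule.mapQ _ _ LinearMap.id h1) (Submodule.mapQ _ _ LinearMap.id h2)
      with hφ
    have hinj : Function.Injective φ := by
      rw [← LinearMap.ker_eq_bot, eq_bot_iff]
      rintro x hx
      obtain ⟨x, rfl⟩ := Submodule.Quotient.mk_surjective _ x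
      simp only [hφ, LinearMap.mem_ker, LinearMap.prod_apply, Function.prod, Prod.mk_eq_zero,
        Submodule.mapQ_apply, LinearMap.id_coe, id_eq, Submodule.Quotient.mk_eq_zero] at hx
      simpa using Submodule.mem_inf.mpr hx
    haveI : IsSemisimpleModule R ((R ⧸ I₀) × (R ⧸ m)) := aux_prod_semisimple
    have hmem : I₀ ⊓ m ∈ S :=
      IsSemisimpleModule.congr (LinearEquiv.ofInjective φ hinj)
    exact hmin _ hmem (lt_of_le_of_ne inf_le_left (fun h => hnot (h ▸ inf_le_right)))
  -- now R ⧸ J is a quotient of R ⧸ I₀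
  have h3 : I₀ ≤ comap (LinearMap.id : R →ₗ[R] R) (ringJacobson R) := by simpa using hle
  set ψ : R ⧸ I₀ →ₗ[R] R ⧸ (ringJacobson R : Ideal R) := Submodule.mapQ _ _ LinearMap.id h3
  have hsurj : Function.Surjective ψ := by
    rintro y
    obtain ⟨x, rfl⟩ := Submodule.Quotient.mk_surjective _ y
    exact ⟨Submodule.Quotient.mk x, by simp [ψ]⟩
  exact IsSemisimpleModule.congr (LinearMap.quotKerEquivOfSurjective ψ hsurj).symm

/-- Any module killed by the Jacobson radical over an artinian ring is semisimple. -/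
lemma aux_semisimple_of_rad_eq_bot [IsArtinianRing R] {M : Type} [AddCommGroup M] [Module R M]
    (h : radicalSubmodule R M = ⊥) : IsSemisimpleModule R M := by
  by_cases hR : Nontrivial R
  · haveI := hR
    haveI := aux_semisimple_quot_jacobson (R := R)
    have hker : ∀ v : M, (ringJacobson R : Ideal R) ≤
        ker (LinearMap.toSpanSingleton R M v) := by
      intro v r hr
      have : r • v ∈ radicalSubmodule R M :=
        Submodule.smul_mem_smul hr Submodule.mem_top
      rw [h] at this
      simpa using this
    refine isSemisimpleModule_of_isSemisimpleModule_submodule'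
      (p := fun v : M => range ((ringJacobson R : Ideal R).liftQ
        (LinearMap.toSpanSingleton R M v) (hker v))) ?_ ?_
    · intro v
      exact IsSemisimpleModule.range _
    · rw [eq_top_iff]
      intro x _
      refine Submodule.mem_iSup_of_mem x ⟨Submodule.Quotient.mk 1, ?_⟩
      simp [Submodule.liftQ_apply]
  · rw [not_nontrivial_iff_subsingleton] at hR
    haveI : Subsingleton M := Module.subsingleton R M
    haveI : Subsingleton (Submodule R M) := by
      constructor
      intro a b
      ext x
      simp [Subsingleton.elim x 0]
    exact (isSemisimpleModule_iff R M).mpr ⟨fun a => ⟨⊥, by rw [Subsingleton.elim a ⊤]; exact isCompl_top_bot⟩⟩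

lemma aux_rad_quot_rad [IsArtinianRing R] (M : Type) [AddCommGroup M] [Module R M] :
    radicalSubmodule R (M ⧸ radicalSubmodule R M) = ⊥ := by
  have : radicalSubmodule R (M ⧸ radicalSubmodule R M) =
      Submodule.map (radicalSubmodule R M).mkQ (radicalSubmodule R M) := by
    rw [radicalSubmodule, radicalSubmodule, Submodule.map_smul'',
      Submodule.map_top, Submodule.range_mkQ]
  rw [this, eq_bot_iff, Submodule.map_le_iff_le_comap, Submodule.comap_bot, Submodule.ker_mkQ]

/-- The top of a nonzero f.g. uniserial module over an artinian ring is simple. -/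
lemma aux_top_uniserial_simple [IsArtinianRing R] {U : Type} [AddCommGroup U] [Module R U]
    [Module.Finite R U] [Nontrivial U] (hU : IsUniserialModule R U) :
    IsSimpleModule R (U ⧸ radicalSubmodule R U) := by
  haveI hV : Nontrivial (U ⧸ radicalSubmodule R U) :=
    Submodule.Quotient.nontrivial_iff.mpr ((aux_rad_ne_top (R := R)).lt_top).ne
  haveI hss : IsSemisimpleModule R (U ⧸ radicalSubmodule R U) :=
    aux_semisimple_of_rad_eq_bot (aux_rad_quot_rad (R := R) U)
  have huni : ∀ N₁ N₂ : Submodule R (U ⧸ radicalSubmodule R U), N₁ ≤ N₂ ∨ N₂ ≤ N₁ := by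
    intro N₁ N₂
    have := hU (Submodule.comap (radicalSubmodule R U).mkQ N₁)
      (Submodule.comap (radicalSubmodule R U).mkQ N₂)
    rcases this with h | h
    · exact Or.inl ((Submodule.comap_le_comap_iff_of_surjective
        (Submodule.mkQ_surjective _)).mp h)
    · exact Or.inr ((Submodule.comap_le_comap_iff_of_surjective
        (Submodule.mkQ_surjective _)).mp h)
  refine (isSimpleModule_iff R _).mpr ?_
  constructor
  intro W
  obtain ⟨W', hc⟩ := exists_isCompl W
  rcases huni W W' with h | h
  · left
    have : W ≤ W ⊓ W' := le_inf le_rfl h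
    rw [hc.disjoint.eq_bot] at this
    exact le_bot_iff.mp this
  · right
    have : W ⊔ W' ≤ W := sup_le le_rfl h
    rw [hc.codisjoint.eq_top] at this
    exact top_le_iff.mp this

/-- In a modular bounded lattice containing an element that is both an atom and a coatom,
there is no chain `⊥ < P < Q < ⊤`. -/
lemma aux_no_three_chain {α : Type*} [Lattice α] [BoundedOrder α] [IsModularLattice α]
    {N P Q : α} (hNa : IsAtom N) (hNc : IsCoatom N) (h1 : ⊥ < P) (h2 : P < Q) (h3 : Q < ⊤) :
    False := by
  by_cases hNQ : N ≤ Q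
  · have hQN : Q = N := by
      by_contra hne
      exact h3.ne (hNc.2 Q (lt_of_le_of_ne hNQ (Ne.symm hne)))
    subst hQN
    exact h1.ne' (hNa.2 P h2)
  · have hPN : ¬ P ≤ N := by
      intro hPN
      have hPQbot : P ≤ N ⊓ Q := le_inf hPN h2.le
      have : N ⊓ Q = ⊥ := hNa.2 _ (lt_of_le_of_ne inf_le_left (fun h => hNQ (h ▸ inf_le_right)))
      exact h1.ne' (le_bot_iff.mp (this ▸ hPQbot))
    have hNP_top : P ⊔ N = ⊤ := by
      have : N < P ⊔ N := lt_of_le_of_ne le_sup_right (fun h => hPN (h ▸ le_sup_left))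
      simpa [sup_comm] using hNc.2 _ this
    have hNQ_bot : N ⊓ Q = ⊥ :=
      hNa.2 _ (lt_of_le_of_ne inf_le_left (fun h => hNQ (h ▸ inf_le_right)))
    have := sup_inf_assoc_of_le (x := P) N h2.le
    rw [hNP_top, hNQ_bot, top_inf_eq, sup_bot_eq] at this
    exact h2.ne this.symm

end Aux
/-- If `0 → U₁ → M₁ ⊕ M₂ → U₂ → 0` is a short exact sequence of finitely generated modules
over a left artinian ring with `U₁`, `U₂` nonzero uniserial modules and `M₁`, `M₂` nonzero,
then both `M₁/J•M₁` and `M₂/J•M₂` are simple. -/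
theorem tops_simple_of_uniserial_extension
    (R U₁ M₁ M₂ U₂ : Type) [Ring R] [IsArtinianRing R]
    [AddCommGroup U₁] [Module R U₁] [Module.Finite R U₁]
    [AddCommGroup M₁] [Module R M₁] [Module.Finite R M₁]
    [AddCommGroup M₂] [Module R M₂] [Module.Finite R M₂]
    [AddCommGroup U₂] [Module R U₂] [Module.Finite R U₂]
    (hU₁ : IsUniserialModule R U₁) (hU₂ : IsUniserialModule R U₂)
    (hU₁ne : Nontrivial U₁) (hU₂ne : Nontrivial U₂)
    (hM₁ne : Nontrivial M₁) (hM₂ne : Nontrivial M₂)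
    (f : U₁ →ₗ[R] M₁ × M₂) (g : M₁ × M₂ →ₗ[R] U₂)
    (hfinj : Function.Injective f) (hgsurj : Function.Surjective g)
    (hexact : LinearMap.range f = LinearMap.ker g) :
    IsSimpleModule R (M₁ ⧸ radicalSubmodule R M₁) ∧
    IsSimpleModule R (M₂ ⧸ radicalSubmodule R M₂) := by
  haveI : Nontrivial R := Module.nontrivial R M₁
  set r : Submodule R (M₁ × M₂) := radicalSubmodule R (M₁ × M₂) with hr
  -- the radical of the product is the product of the radicals
  have hr_prod : r = (radicalSubmodule R M₁).prod (radicalSubmodule R M₂) := by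
    apply le_antisymm
    · rw [hr, radicalSubmodule]
      refine Submodule.smul_le.mpr fun c hc x _ => ?_
      exact Submodule.mem_prod.mpr
        ⟨Submodule.smul_mem_smul hc Submodule.mem_top,
         Submodule.smul_mem_smul hc Submodule.mem_top⟩
    · rintro ⟨a, b⟩ hab
      rw [Submodule.mem_prod] at hab
      have h1 : ((a, 0) : M₁ × M₂) ∈ r := by
        have hle : Submodule.map (inl R M₁ M₂) (radicalSubmodule R M₁) ≤ r := by
          rw [radicalSubmodule, Submodule.map_smul'', hr, radicalSubmodule]
          exact Submodule.smul_mono le_rfl le_top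
        exact hle ⟨a, hab.1, rfl⟩
      have h2 : ((0, b) : M₁ × M₂) ∈ r := by
        have hle : Submodule.map (inr R M₁ M₂) (radicalSubmodule R M₂) ≤ r := by
          rw [radicalSubmodule, Submodule.map_smul'', hr, radicalSubmodule]
          exact Submodule.smul_mono le_rfl le_top
        exact hle ⟨b, hab.2, rfl⟩
      have := Submodule.add_mem r h1 h2
      simpa using this
  have hmapr : Submodule.map r.mkQ r = ⊥ := by
    rw [eq_bot_iff, Submodule.map_le_iff_le_comap, Submodule.comap_bot, Submodule.ker_mkQ]
  -- the image of g of the radical is the radical of U₂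
  have hmapg : Submodule.map g r = radicalSubmodule R U₂ := by
    rw [hr, radicalSubmodule, Submodule.map_smul'', Submodule.map_top,
      LinearMap.range_eq_top.mpr hgsurj, radicalSubmodule]
  -- the submodule N
  set N : Submodule R ((M₁ × M₂) ⧸ r) := LinearMap.range (r.mkQ ∘ₗ f) with hN
  -- N is a coatom: the quotient by it is the (simple) top of U₂
  haveI hU₂simple : IsSimpleModule R (U₂ ⧸ radicalSubmodule R U₂) := aux_top_uniserial_simple hU₂
  have hle2 : r ≤ LinearMap.ker ((radicalSubmodule R U₂).mkQ ∘ₗ g) := by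
    rw [LinearMap.ker_comp, Submodule.ker_mkQ, ← hmapg]
    exact fun x hx => Submodule.mem_comap.mpr (Submodule.mem_map_of_mem hx)
  set φ : ((M₁ × M₂) ⧸ r) →ₗ[R] U₂ ⧸ radicalSubmodule R U₂ := r.liftQ _ hle2 with hφ
  have hφsurj : Function.Surjective φ := by
    intro y
    obtain ⟨u, rfl⟩ := Submodule.Quotient.mk_surjective _ y
    obtain ⟨x, rfl⟩ := hgsurj u
    exact ⟨Submodule.Quotient.mk x, by simp [hφ, Submodule.liftQ_apply]⟩
  have hkerφ : LinearMap.ker φ = N := by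
    rw [hφ, Submodule.ker_liftQ, LinearMap.ker_comp, Submodule.ker_mkQ, ← hmapg,
      Submodule.comap_map_eq, hexact.symm, Submodule.map_sup, hmapr, sup_comm, sup_bot_eq,
      hN, LinearMap.range_comp]
  have hNco : IsCoatom N := by
    rw [← hkerφ]
    exact LinearMap.isCoatom_ker_of_surjective hφsurj
  -- the images A, B of M₁, M₂
  set ψ₁ : M₁ →ₗ[R] (M₁ × M₂) ⧸ r := r.mkQ ∘ₗ inl R M₁ M₂ with hψ₁
  set ψ₂ : M₂ →ₗ[R] (M₁ × M₂) ⧸ r := r.mkQ ∘ₗ inr R M₁ M₂ with hψ₂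
  have hker₁ : LinearMap.ker ψ₁ = radicalSubmodule R M₁ := by
    rw [hψ₁, LinearMap.ker_comp, Submodule.ker_mkQ, hr_prod]
    ext x
    simp [Submodule.mem_comap, Submodule.mem_prod]
  have hker₂ : LinearMap.ker ψ₂ = radicalSubmodule R M₂ := by
    rw [hψ₂, LinearMap.ker_comp, Submodule.ker_mkQ, hr_prod]
    ext x
    simp [Submodule.mem_comap, Submodule.mem_prod]
  set A : Submodule R ((M₁ × M₂) ⧸ r) := LinearMap.range ψ₁ with hA
  set B : Submodule R ((M₁ × M₂) ⧸ r) := LinearMap.range ψ₂ with hB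
  have hAne : A ≠ ⊥ := by
    intro h
    have h' : LinearMap.ker ψ₁ = ⊤ := LinearMap.ker_eq_top.mpr (LinearMap.range_eq_bot.mp h)
    rw [hker₁] at h'
    exact aux_rad_ne_top (R := R) h'
  have hBne : B ≠ ⊥ := by
    intro h
    have h' : LinearMap.ker ψ₂ = ⊤ := LinearMap.ker_eq_top.mpr (LinearMap.range_eq_bot.mp h)
    rw [hker₂] at h'
    exact aux_rad_ne_top (R := R) h'
  have hrange_inl : LinearMap.range (inl R M₁ M₂) =
      Submodule.prod ⊤ (⊥ : Submodule R M₂) := by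
    ext ⟨x, y⟩
    simp [Prod.ext_iff, eq_comm]
  have hrange_inr : LinearMap.range (inr R M₁ M₂) =
      Submodule.prod (⊥ : Submodule R M₁) ⊤ := by
    ext ⟨x, y⟩
    simp [Prod.ext_iff, eq_comm]
  have hcomapA : Submodule.comap r.mkQ A = Submodule.prod ⊤ (radicalSubmodule R M₂) := by
    rw [hA, hψ₁, LinearMap.range_comp, Submodule.comap_map_eq, Submodule.ker_mkQ, hrange_inl,
      hr_prod, Submodule.prod_sup_prod, top_sup_eq, bot_sup_eq]
  have hcomapB : Submodule.comap r.mkQ B = Submodule.prod (radicalSubmodule R M₁) ⊤ := by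
    rw [hB, hψ₂, LinearMap.range_comp, Submodule.comap_map_eq, Submodule.ker_mkQ, hrange_inr,
      hr_prod, Submodule.prod_sup_prod, bot_sup_eq, top_sup_eq]
  have hAB_inf : A ⊓ B = ⊥ := by
    apply Submodule.comap_injective_of_surjective (Submodule.mkQ_surjective r)
    rw [Submodule.comap_inf, hcomapA, hcomapB, Submodule.comap_bot, Submodule.ker_mkQ, hr_prod]
    ext ⟨x, y⟩
    simp [Submodule.mem_prod]
  have hAB_sup : A ⊔ B = ⊤ := by
    rw [hA, hB, hψ₁, hψ₂, LinearMap.range_comp, LinearMap.range_comp, ← Submodule.map_sup,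
      sup_range_inl_inr, Submodule.map_top, LinearMap.range_eq_top.mpr
      (Submodule.mkQ_surjective r)]
  have hAnt : A ≠ ⊤ := by
    intro h
    apply hBne
    rw [← hAB_inf, h, top_inf_eq]
  have hBnt : B ≠ ⊤ := by
    intro h
    apply hAne
    rw [← hAB_inf, h, inf_top_eq]
  -- N is an atom: it is isomorphic to the (simple) top of U₁
  haveI hU₁simple : IsSimpleModule R (U₁ ⧸ radicalSubmodule R U₁) := aux_top_uniserial_simple hU₁
  have hU₁coatom : IsCoatom (radicalSubmodule R U₁) := isSimpleModule_iff_isCoatom.mp hU₁simple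
  have hradle : radicalSubmodule R U₁ ≤ LinearMap.ker (r.mkQ ∘ₗ f) := by
    rw [LinearMap.ker_comp, Submodule.ker_mkQ, ← Submodule.map_le_iff_le_comap,
      radicalSubmodule, Submodule.map_smul'', hr, radicalSubmodule]
    exact Submodule.smul_mono le_rfl le_top
  have hNatom : IsAtom N := by
    by_cases hK : LinearMap.ker (r.mkQ ∘ₗ f) = ⊤
    · exfalso
      have hNbot : N = ⊥ := by
        rw [hN, LinearMap.ker_eq_top.mp hK, LinearMap.range_zero]
      have hAtop : A = ⊤ := (hNbot ▸ hNco).2 A (bot_lt_iff_ne_bot.mpr hAne)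
      exact hAnt hAtop
    · have hKeq : LinearMap.ker (r.mkQ ∘ₗ f) = radicalSubmodule R U₁ := by
        by_contra hne
        exact hK (hU₁coatom.2 _ (lt_of_le_of_ne hradle (Ne.symm hne)))
      rw [← isSimpleModule_iff_isAtom]
      haveI : IsSimpleModule R (U₁ ⧸ LinearMap.ker (r.mkQ ∘ₗ f)) := by
        rw [hKeq]; exact hU₁simple
      exact IsSimpleModule.congr (LinearMap.quotKerEquivRange (r.mkQ ∘ₗ f)).symm
  -- the key lattice step
  have key : ∀ C : Submodule R ((M₁ × M₂) ⧸ r), C ≠ ⊥ → C ≠ ⊤ → IsAtom C := by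
    intro C hCb hCt
    refine ⟨hCb, fun P hP => ?_⟩
    by_contra hPb
    exact aux_no_three_chain hNatom hNco (bot_lt_iff_ne_bot.mpr hPb) hP
      (lt_top_iff_ne_top.mpr hCt)
  constructor
  · haveI : IsSimpleModule R ↥A := isSimpleModule_iff_isAtom.mpr (key A hAne hAnt)
    have e := LinearMap.quotKerEquivRange ψ₁
    rw [hker₁] at e
    exact IsSimpleModule.congr e
  · haveI : IsSimpleModule R ↥B := isSimpleModule_iff_isAtom.mpr (key B hBne hBnt)
    have e := LinearMap.quotKerEquivRange ψ₂
    rw [hker₂] at e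
    exact IsSimpleModule.congr e
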